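/- Let w be an infinite binary word with strictly increasing gap function. Then the first difference of the subword complexity satisfies 1 ≤ f_w(n+1) - f_w(n) ≤ ⌊n/2⌋ + 1 for all n ≥ 1. -/

import Mathlib

/-- `u` occurs in `w` starting at position `i` (positions are 1-indexed). -/
def FactorAt (w : ℕ → Fin 2) (i : ℕ) (u : List (Fin 2)) : Prop :=
  u = (List.range u.length).map (fun k => w (i + k))

/-- `u` is a subword (factor) of the infinite word `w`. -/
def IsFactor (w : ℕ → Fin 2) (u : List (Fin 2)) : Prop :=
  ∃ i, 1 ≤ i ∧ FactorAt w i u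

/-- The subword complexity function of `w`. -/
noncomputable def complexity (w : ℕ → Fin 2) (n : ℕ) : ℕ :=
  Set.ncard {u : List (Fin 2) | u.length = n ∧ IsFactor w u}

/-- `G` is the 1-distribution function of `w`: `G 0 = 0` and `G i` is the
position of the `i`-th `1` of `w` (positions 1-indexed). -/
def OneDistrib (w : ℕ → Fin 2) (G : ℕ → ℕ) : Prop :=
  G 0 = 0 ∧ StrictMono G ∧ ∀ p, 1 ≤ p → (w p = 1 ↔ ∃ i, 1 ≤ i ∧ G i = p)

/-- The gap function associated with a 1-distribution function `G`. -/
def gap (G : ℕ → ℕ) (i : ℕ) : ℕ := G i - G (i - 1)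

/-- The gap function is strictly increasing. -/
def GapIncreasing (G : ℕ → ℕ) : Prop :=
  ∀ i, 1 ≤ i → gap G i < gap G (i + 1)

/-- `u` is a right special factor of `w`. -/
def RightSpecial (w : ℕ → Fin 2) (u : List (Fin 2)) : Prop :=
  IsFactor w (u ++ [0]) ∧ IsFactor w (u ++ [1])

lemma fin2 : ∀ a : Fin 2, a = 0 ∨ a = 1 := by decide

def Wnd (w : ℕ → Fin 2) (n i : ℕ) : List (Fin 2) :=
  (List.range n).map (fun k => w (i + k))

lemma Wnd_length (w : ℕ → Fin 2) (n i : ℕ) : (Wnd w n i).length = n := by simp [Wnd]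

lemma Wnd_getElem (w : ℕ → Fin 2) {n : ℕ} (i : ℕ) {k : ℕ} (h : k < n) :
    (Wnd w n i)[k]'(by simp [Wnd_length]; omega) = w (i + k) := by
  simp [Wnd]

lemma Wnd_succ (w : ℕ → Fin 2) (n i : ℕ) :
    Wnd w (n + 1) i = Wnd w n i ++ [w (i + n)] := by
  simp [Wnd, List.range_succ]

lemma mem_factorSet_iff {w : ℕ → Fin 2} {n : ℕ} {u : List (Fin 2)} :
    (u.length = n ∧ IsFactor w u) ↔ ∃ i, 1 ≤ i ∧ u = Wnd w n i := by
  constructor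
  · rintro ⟨hlen, i, hi, hfa⟩
    refine ⟨i, hi, ?_⟩
    rw [FactorAt] at hfa
    rw [hfa, hlen]; rfl
  · rintro ⟨i, hi, rfl⟩
    refine ⟨Wnd_length w n i, i, hi, ?_⟩
    show Wnd w n i = Wnd w ((Wnd w n i).length) i
    rw [Wnd_length]

lemma factorSet_finite (w : ℕ → Fin 2) (n : ℕ) :
    {u : List (Fin 2) | u.length = n ∧ IsFactor w u}.Finite :=
  (List.finite_length_eq (Fin 2) n).subset (fun _ hu => hu.1)

section OD
variable {w : ℕ → Fin 2} {G : ℕ → ℕ}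

lemma w_G_eq_one (hG : OneDistrib w G) {i : ℕ} (hi : 1 ≤ i) : w (G i) = 1 :=
  (hG.2.2 _ (le_trans hi hG.2.1.le_apply)).2 ⟨i, hi, rfl⟩

lemma w_zero_of_between (hG : OneDistrib w G) {a q : ℕ} (h1 : G a < q) (h2 : q < G (a + 1)) :
    w q = 0 := by
  obtain ⟨hG0, hmono, hiff⟩ := hG
  have hq1 : 1 ≤ q := by omega
  rcases fin2 (w q) with h | h
  · exact h
  · obtain ⟨i, hi, hGi⟩ := (hiff q hq1).1 h
    have ha : a < i := hmono.lt_iff_lt.1 (by omega)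
    have hb : i < a + 1 := hmono.lt_iff_lt.1 (by omega)
    omega

lemma w_one_pos (hG : OneDistrib w G) {q : ℕ} (hq : 1 ≤ q) (h : w q = 1) :
    ∃ m, 1 ≤ m ∧ G m = q := (hG.2.2 q hq).1 h

lemma gap_pos (hmono : StrictMono G) {i : ℕ} (hi : 1 ≤ i) : 1 ≤ gap G i := by
  have := hmono (show i - 1 < i by omega)
  unfold gap; omega

lemma G_pred_add_gap (hmono : StrictMono G) {i : ℕ} (hi : 1 ≤ i) :
    G (i - 1) + gap G i = G i := by
  have := hmono (show i - 1 < i by omega)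
  unfold gap; omega

lemma gap_lt_gap (hg : GapIncreasing G) {i j : ℕ} (hi : 1 ≤ i) (hij : i < j) :
    gap G i < gap G j := by
  induction j with
  | zero => omega
  | succ j ih =>
    rcases Nat.lt_or_ge i j with h | h
    · exact lt_trans (ih h) (hg j (by omega))
    · have hij' : i = j := by omega
      subst hij'; exact hg i hi

lemma gap_le_gap (hg : GapIncreasing G) {i j : ℕ} (hi : 1 ≤ i) (hij : i ≤ j) :
    gap G i ≤ gap G j := by
  rcases Nat.lt_or_ge i j with h | h
  · exact (gap_lt_gap hg hi h).le
  · have : i = j := by omega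
    subst this; exact le_refl _

lemma gap_ge (hmono : StrictMono G) (hg : GapIncreasing G) :
    ∀ i, 1 ≤ i → i ≤ gap G i := by
  intro i
  induction i with
  | zero => omega
  | succ i ih =>
    intro _
    rcases Nat.eq_zero_or_pos i with h | h
    · subst h; exact gap_pos hmono (le_refl 1)
    · have h1 := hg i h
      have h2 := ih h
      omega

/-- if `w q = 1` and everything strictly between `G m` and `q` is zero, then `q = G (m+1)`. -/
lemma next_one (hG : OneDistrib w G) {m q : ℕ} (hlt : G m < q) (hq : w q = 1)
    (hz : ∀ x, G m < x → x < q → w x = 0) : q = G (m + 1) := by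
  obtain ⟨hG0, hmono, hiff⟩ := hG
  obtain ⟨r, hr, hGr⟩ := (hiff q (by omega)).1 hq
  have hmr : m < r := hmono.lt_iff_lt.1 (by omega)
  rcases Nat.lt_or_ge (m + 1) r with h | h
  · have h1 : G m < G (m + 1) := hmono (by omega)
    have h2 : G (m + 1) < G r := hmono h
    have := hz (G (m + 1)) h1 (by omega)
    have := w_G_eq_one ⟨hG0, hmono, hiff⟩ (show 1 ≤ m + 1 by omega)
    simp_all
  · have hrm : r = m + 1 := by omega
    rw [hrm] at hGr; omega

end OD

section Core
variable {w : ℕ → Fin 2} {G : ℕ → ℕ}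

lemma window_struct (hG : OneDistrib w G) (hg : GapIncreasing G) {n p p' : ℕ}
    (hn : 1 ≤ n) (hp : 1 ≤ p) (hp' : 1 ≤ p')
    (heq : ∀ k, k < n → w (p + k) = w (p' + k))
    (h1 : w (p + n) = 1) (h0 : w (p' + n) = 0) :
    (∀ k, k < n → w (p + k) = 0) ∨
      ∃ t, (n + 1) / 2 ≤ t ∧ t ≤ n - 1 ∧
        ∀ k, k < n → w (p + k) = (if k = n - 1 - t then 1 else 0) := by
  classical
  have hmono := hG.2.1
  by_cases hall : ∀ k, k < n → w (p + k) = 0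
  · exact Or.inl hall
  right
  push_neg at hall
  obtain ⟨k0, hk0n, hk0⟩ := hall
  have hk0' : w (p + k0) = 1 := by rcases fin2 (w (p + k0)) with h | h; exact absurd h hk0; exact h
  set P : ℕ → Prop := fun k => w (p + k) = 1 with hP
  set j := Nat.findGreatest P (n - 1) with hj
  have hjle : j ≤ n - 1 := Nat.findGreatest_le _
  have hjspec : w (p + j) = 1 := Nat.findGreatest_spec (P := P) (show k0 ≤ n - 1 by omega) hk0'
  have hjgt : ∀ k, j < k → k < n → w (p + k) = 0 := by
    intro k h1k h2k
    have := Nat.findGreatest_is_greatest (P := P) (n := n - 1) h1k (by omega)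
    rcases fin2 (w (p + k)) with h | h
    · exact h
    · exact absurd h this
  -- the position of the last 1 of the window
  obtain ⟨m, hm1, hGm⟩ := w_one_pos hG (show 1 ≤ p + j by omega) hjspec
  -- the next one is at p + n
  have hnext : p + n = G (m + 1) := by
    apply next_one hG (by omega) h1
    intro x hx1 hx2
    have hx : x = p + (x - p) := by omega
    rw [hx]
    exact hjgt _ (by omega) (by omega)
  have hgapm1 : gap G (m + 1) = n - j := by
    have := hmono (show m < m + 1 by omega)
    simp only [gap, Nat.add_sub_cancel]
    omega
  set t := n - 1 - j with ht
  have hjt : j = n - 1 - t := by omega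
  have hgapt : gap G (m + 1) = t + 1 := by omega
  -- primed occurrence
  have hjspec' : w (p' + j) = 1 := by rw [← heq j (by omega)]; exact hjspec
  obtain ⟨m', hm'1, hGm'⟩ := w_one_pos hG (show 1 ≤ p' + j by omega) hjspec'
  have hzero' : ∀ x, p' + j < x → x ≤ p' + n → w x = 0 := by
    intro x hx1 hx2
    have hx : x = p' + (x - p') := by omega
    rcases Nat.lt_or_ge (x - p') n with h | h
    · rw [hx, ← heq _ h]
      exact hjgt _ (by omega) h
    · have : x = p' + n := by omega
      rw [this]; exact h0
  have hG'big : p' + n < G (m' + 1) := by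
    by_contra hcon
    push_neg at hcon
    have h1' : G m' < G (m' + 1) := hmono (by omega)
    have ha := hzero' (G (m' + 1)) (by omega) hcon
    have hb := w_G_eq_one hG (show 1 ≤ m' + 1 by omega)
    rw [ha] at hb
    exact absurd hb (by decide)
  have hgapm'1 : t + 2 ≤ gap G (m' + 1) := by
    have := hmono (show m' < m' + 1 by omega)
    simp only [gap, Nat.add_sub_cancel]
    omega
  have hmm' : m + 1 < m' + 1 := by
    by_contra hcon
    push_neg at hcon
    have := gap_le_gap hg (show 1 ≤ m' + 1 by omega) hcon
    omega
  -- prefix of the window is all zeros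
  have hpre : ∀ k, k < j → w (p + k) = 0 := by
    by_contra hcon
    push_neg at hcon
    obtain ⟨k2, hk2j, hk2⟩ := hcon
    have hk2' : w (p + k2) = 1 := by
      rcases fin2 (w (p + k2)) with h | h; exact absurd h hk2; exact h
    set j2 := Nat.findGreatest P (j - 1) with hj2
    have hj2le : j2 ≤ j - 1 := Nat.findGreatest_le _
    have hj2spec : w (p + j2) = 1 := Nat.findGreatest_spec (P := P) (show k2 ≤ j - 1 by omega) hk2'
    have hj2gt : ∀ k, j2 < k → k < j → w (p + k) = 0 := by
      intro k h1k h2k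
      have := Nat.findGreatest_is_greatest (P := P) (n := j - 1) h1k (by omega)
      rcases fin2 (w (p + k)) with h | h
      · exact h
      · exact absurd h this
    obtain ⟨m2, hm21, hGm2⟩ := w_one_pos hG (show 1 ≤ p + j2 by omega) hj2spec
    have hnext2 : p + j = G (m2 + 1) := by
      apply next_one hG (by omega) hjspec
      intro x hx1 hx2
      have hx : x = p + (x - p) := by omega
      rw [hx]
      exact hj2gt _ (by omega) (by omega)
    have hm2m : m2 + 1 = m := hmono.injective (by omega)
    have hgapm : gap G m = j - j2 := by
      have h2 := G_pred_add_gap hmono hm1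
      have h3 : m - 1 = m2 := by omega
      rw [h3] at h2
      omega
    -- primed side
    have hj2spec' : w (p' + j2) = 1 := by rw [← heq j2 (by omega)]; exact hj2spec
    obtain ⟨m2', hm2'1, hGm2'⟩ := w_one_pos hG (show 1 ≤ p' + j2 by omega) hj2spec'
    have hnext2' : p' + j = G (m2' + 1) := by
      apply next_one hG (by omega) hjspec'
      intro x hx1 hx2
      have hx : x = p' + (x - p') := by omega
      rw [hx, ← heq _ (by omega)]
      exact hj2gt _ (by omega) (by omega)
    have hm2'm : m2' + 1 = m' := hmono.injective (by omega)
    have hgapm' : gap G m' = j - j2 := by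
      have h2 := G_pred_add_gap hmono hm'1
      have h3 : m' - 1 = m2' := by omega
      rw [h3] at h2
      omega
    -- gap injectivity contradiction
    have : m = m' := by
      rcases lt_trichotomy m m' with h | h | h
      · have := gap_lt_gap hg hm1 h; omega
      · exact h
      · have := gap_lt_gap hg hm'1 h; omega
    omega
  -- bound on t : j < gap G m
  have hjgap : j < gap G m := by
    by_contra hcon
    push_neg at hcon
    have hgm := G_pred_add_gap hmono hm1
    rcases Nat.lt_or_ge 1 m with h | h
    · -- m ≥ 2 : G (m-1) = p + (j - gap G m) is inside the window, contradiction
      have hGm1 : G (m - 1) = p + (j - gap G m) := by omega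
      have h1' := w_G_eq_one hG (show 1 ≤ m - 1 by omega)
      have h0' := hpre (j - gap G m) (by have := gap_pos hmono hm1; omega)
      rw [hGm1, h0'] at h1'
      exact absurd h1' (by decide)
    · -- m = 1 : G 0 = 0 so gap G 1 = G 1 = p + j > j
      have hm : m = 1 := by omega
      subst hm
      have hG0 := hG.1
      have hgg : gap G 1 = G 1 - G 0 := rfl
      omega
  have hbound : n ≤ 2 * t := by
    have h1' : gap G m < gap G (m + 1) := gap_lt_gap hg hm1 (by omega)
    omega
  refine ⟨t, by omega, by omega, ?_⟩
  intro k hk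
  rcases lt_trichotomy k j with h | h | h
  · rw [if_neg (by omega)]
    exact hpre k h
  · rw [if_pos (by omega)]
    subst h; exact hjspec
  · rw [if_neg (by omega)]
    exact hjgt k h hk

end Core

section Assemble
variable {w : ℕ → Fin 2} {G : ℕ → ℕ}

lemma factor_append_elim {n : ℕ} {v : List (Fin 2)} (hv : v.length = n) {b : Fin 2}
    (hf : IsFactor w (v ++ [b])) : ∃ i, 1 ≤ i ∧ v = Wnd w n i ∧ w (i + n) = b := by
  have hlen : (v ++ [b]).length = n + 1 := by simp [hv]
  obtain ⟨i, hi, hu⟩ := mem_factorSet_iff.1 ⟨hlen, hf⟩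
  rw [Wnd_succ] at hu
  have h2 := List.append_inj hu (by rw [hv, Wnd_length])
  refine ⟨i, hi, h2.1, ?_⟩
  have := h2.2
  injection this with h _
  exact h.symm

lemma Wnd_eq_elim {n p p' : ℕ} (h : Wnd w n p = Wnd w n p') :
    ∀ k, k < n → w (p + k) = w (p' + k) := by
  intro k hk
  have h1 : k < (Wnd w n p).length := by rw [Wnd_length]; exact hk
  have h2 := List.getElem_of_eq h h1
  simpa [Wnd] using h2

lemma rs_subset (hG : OneDistrib w G) (hg : GapIncreasing G) {n : ℕ} (hn : 1 ≤ n)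
    {v : List (Fin 2)} (hv : v.length = n) (hrs : RightSpecial w v) :
    v = List.replicate n 0 ∨
      ∃ t, (n + 1) / 2 ≤ t ∧ t ≤ n - 1 ∧
        v = (List.range n).map (fun k => if k = n - 1 - t then (1 : Fin 2) else 0) := by
  obtain ⟨h0f, h1f⟩ := hrs
  obtain ⟨p', hp', hv0, hw0⟩ := factor_append_elim hv h0f
  obtain ⟨p, hp, hv1, hw1⟩ := factor_append_elim hv h1f
  have heq := Wnd_eq_elim (hv1.symm.trans hv0)
  rcases window_struct hG hg hn hp hp' heq hw1 hw0 with h | ⟨t, ht1, ht2, h⟩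
  · left
    rw [hv1]
    apply List.ext_getElem (by simp [Wnd_length])
    intro k h1 h2
    rw [Wnd_length] at h1
    simp only [Wnd, List.getElem_map, List.getElem_range, List.getElem_replicate]
    exact h k h1
  · right
    refine ⟨t, ht1, ht2, ?_⟩
    rw [hv1]
    apply List.ext_getElem (by simp [Wnd_length])
    intro k h1 h2
    rw [Wnd_length] at h1
    simp only [Wnd, List.getElem_map, List.getElem_range]
    exact h k h1

lemma upper_bound (hG : OneDistrib w G) (hg : GapIncreasing G) {n : ℕ} (hn : 1 ≤ n) :
    complexity w (n + 1) ≤ complexity w n + (n / 2 + 1) := by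
  classical
  unfold complexity
  set A := {u : List (Fin 2) | u.length = n + 1 ∧ IsFactor w u} with hA
  set B := {u : List (Fin 2) | u.length = n ∧ IsFactor w u} with hB
  set R := {v : List (Fin 2) | v.length = n ∧ RightSpecial w v} with hR
  set Z : Finset (List (Fin 2)) :=
    insert (List.replicate n 0)
      ((Finset.Icc ((n + 1) / 2) (n - 1)).image fun t =>
        (List.range n).map fun k => if k = n - 1 - t then (1 : Fin 2) else 0) with hZ
  have hZcard : Z.card ≤ n / 2 + 1 := by
    refine (Finset.card_insert_le _ _).trans ?_
    have h1 := Finset.card_image_le (s := Finset.Icc ((n + 1) / 2) (n - 1))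
      (f := fun t => (List.range n).map fun k => if k = n - 1 - t then (1 : Fin 2) else 0)
    rw [Nat.card_Icc] at h1
    omega
  have hRZ : R ⊆ ↑Z := by
    rintro v ⟨hvl, hvrs⟩
    rw [Finset.mem_coe, hZ, Finset.mem_insert]
    rcases rs_subset hG hg hn hvl hvrs with h | ⟨t, ht1, ht2, h⟩
    · exact Or.inl h
    · refine Or.inr (Finset.mem_image.2 ⟨t, Finset.mem_Icc.2 ⟨ht1, ht2⟩, h.symm⟩)
  have hRcard : R.ncard ≤ n / 2 + 1 := by
    refine le_trans ?_ hZcard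
    rw [← Set.ncard_coe_finset Z]
    exact Set.ncard_le_ncard hRZ Z.finite_toSet
  have hRfin : R.Finite := Set.Finite.subset Z.finite_toSet hRZ
  set c : List (Fin 2) → List (Fin 2) :=
    fun v => v ++ [if (v ++ [0]) ∈ A then (0 : Fin 2) else 1] with hc
  have hsub : A ⊆ c '' B ∪ (fun v => v ++ [(1 : Fin 2)]) '' R := by
    intro u hu
    obtain ⟨i, hi, hui⟩ := mem_factorSet_iff.1 hu
    have hsplit : u = Wnd w n i ++ [w (i + n)] := by rw [hui, Wnd_succ]
    have hvB : Wnd w n i ∈ B := mem_factorSet_iff.2 ⟨i, hi, rfl⟩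
    rcases fin2 (w (i + n)) with hb | hb
    · left
      refine ⟨Wnd w n i, hvB, ?_⟩
      have hmem : Wnd w n i ++ [(0 : Fin 2)] ∈ A := by rw [← hb, ← hsplit]; exact hu
      simp only [hc, if_pos hmem]
      rw [hsplit, hb]
    · by_cases h0 : (Wnd w n i ++ [(0 : Fin 2)]) ∈ A
      · right
        refine ⟨Wnd w n i, ⟨Wnd_length w n i, h0.2, ?_⟩, by rw [hsplit, hb]⟩
        have : Wnd w n i ++ [(1 : Fin 2)] = u := by rw [hsplit, hb]
        rw [this]
        exact hu.2
      · left
        refine ⟨Wnd w n i, hvB, ?_⟩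
        simp only [hc, if_neg h0]
        rw [hsplit, hb]
  have hBfin := factorSet_finite w n
  have hAfin := factorSet_finite w (n + 1)
  calc A.ncard ≤ (c '' B ∪ (fun v => v ++ [(1 : Fin 2)]) '' R).ncard :=
        Set.ncard_le_ncard hsub ((hBfin.image c).union (hRfin.image _))
    _ ≤ (c '' B).ncard + ((fun v => v ++ [(1 : Fin 2)]) '' R).ncard := Set.ncard_union_le _ _
    _ ≤ B.ncard + R.ncard := add_le_add (Set.ncard_image_le hBfin) (Set.ncard_image_le hRfin)
    _ ≤ B.ncard + (n / 2 + 1) := add_le_add (le_refl _) hRcard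

lemma lower_bound (hG : OneDistrib w G) (hg : GapIncreasing G) (n : ℕ) :
    complexity w n + 1 ≤ complexity w (n + 1) := by
  have hmono := hG.2.1
  unfold complexity
  set A := {u : List (Fin 2) | u.length = n + 1 ∧ IsFactor w u} with hA
  set B := {u : List (Fin 2) | u.length = n ∧ IsFactor w u} with hB
  have hGsum := G_pred_add_gap hmono (show 1 ≤ n + 2 by omega)
  rw [show n + 2 - 1 = n + 1 from rfl] at hGsum
  have hgap : n + 2 ≤ gap G (n + 2) := gap_ge hmono hg (n + 2) (by omega)
  have hG1 : (n : ℕ) + 1 ≤ G (n + 1) := hmono.le_apply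
  set i0 := G (n + 2) - (n + 1) with hi0
  have hi0' : G (n + 1) < i0 := by omega
  have hi0pos : 1 ≤ i0 := by omega
  have key0 : ∀ k, k ≤ n → w (i0 + k) = 0 := by
    intro k hk
    exact w_zero_of_between hG (a := n + 1) (by omega)
      (by show i0 + k < G (n + 2); omega)
  set i1 := G (n + 2) - n with hi1
  have hi1pos : 1 ≤ i1 := by omega
  have key1 : ∀ k, k < n → w (i1 + k) = 0 := by
    intro k hk
    exact w_zero_of_between hG (a := n + 1) (by omega)
      (by show i1 + k < G (n + 2); omega)
  have key1' : w (i1 + n) = 1 := by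
    rw [show i1 + n = G (n + 2) by omega]
    exact w_G_eq_one hG (by omega)
  set z1 : List (Fin 2) := List.replicate (n + 1) 0 with hz1def
  set z2 : List (Fin 2) := List.replicate n 0 ++ [1] with hz2def
  have hz1 : Wnd w (n + 1) i0 = z1 := by
    apply List.ext_getElem (by simp [Wnd_length, hz1def])
    intro k h1 h2
    rw [Wnd_length] at h1
    simp only [hz1def, Wnd, List.getElem_map, List.getElem_range, List.getElem_replicate]
    exact key0 k (by omega)
  have hwn : Wnd w n i1 = List.replicate n 0 := by
    apply List.ext_getElem (by simp [Wnd_length])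
    intro k h1 h2
    rw [Wnd_length] at h1
    simp only [Wnd, List.getElem_map, List.getElem_range, List.getElem_replicate]
    exact key1 k h1
  have hz2 : Wnd w (n + 1) i1 = z2 := by
    rw [Wnd_succ, hwn, key1', hz2def]
  have hz1A : z1 ∈ A := mem_factorSet_iff.2 ⟨i0, hi0pos, hz1.symm⟩
  have hz2A : z2 ∈ A := mem_factorSet_iff.2 ⟨i1, hi1pos, hz2.symm⟩
  have hz12 : z2 ≠ z1 := by
    intro h
    rw [hz2def, hz1def, List.replicate_succ'] at h
    have h2 := List.append_inj h (by simp)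
    have h3 := h2.2
    injection h3 with h4 _
    exact absurd h4 (by decide)
  have hsub : B ⊆ (List.take n) '' (A \ {z1}) := by
    intro v hv
    obtain ⟨i, hi, rfl⟩ := mem_factorSet_iff.1 hv
    have huA : Wnd w (n + 1) i ∈ A := mem_factorSet_iff.2 ⟨i, hi, rfl⟩
    have htake : List.take n (Wnd w (n + 1) i) = Wnd w n i := by
      rw [Wnd_succ]
      exact List.take_left' (Wnd_length w n i)
    by_cases hz : Wnd w (n + 1) i = z1
    · have hv0 : Wnd w n i = List.replicate n 0 := by
        rw [← htake, hz, hz1def, List.take_replicate]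
        congr 1
        omega
      refine ⟨z2, ⟨hz2A, hz12⟩, ?_⟩
      rw [hv0, hz2def]
      exact List.take_left' (by simp)
    · exact ⟨_, ⟨huA, hz⟩, htake⟩
  have hAfin := factorSet_finite w (n + 1)
  have hBfin := factorSet_finite w n
  have hd : (A \ {z1}).Finite := hAfin.diff
  have h1 : B.ncard ≤ (A \ {z1}).ncard :=
    le_trans (Set.ncard_le_ncard hsub (hd.image _)) (Set.ncard_image_le hd)
  have h2 : (A \ {z1}).ncard = A.ncard - 1 := Set.ncard_diff_singleton_of_mem hz1A
  have h3 : 0 < A.ncard := (Set.ncard_pos hAfin).2 ⟨z1, hz1A⟩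
  omega

end Assemble

theorem stmt10 (w : ℕ → Fin 2) (G : ℕ → ℕ) (hG : OneDistrib w G)
    (hg : GapIncreasing G) (n : ℕ) (hn : 1 ≤ n) :
    complexity w n + 1 ≤ complexity w (n + 1) ∧
    complexity w (n + 1) ≤ complexity w n + (n / 2 + 1) := by
  exact ⟨lower_bound hG hg n, upper_bound hG hg hn⟩
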